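/- Sample complexity, dimension-dependent version: let X_1,…,X_T be i.i.d. S-valued random variables with common law μ, and suppose that for every f ∈ Φ and every coordinate k ∈ {1,…,d} the function s ↦ ⟨r(f,s), e_k⟩ takes values in an interval of length at most Δ > 0. Fix ε > 0 and δ ∈ (0,1). If T ≥ (1/(2ε²)) · log(2·|Φ|·d/δ), then with probability at least 1 − δ the following holds simultaneously for all f ∈ Φ and all w ∈ ℝ^d: (1/T) Σ_{t=1}^T ⟨r(f, X_t), w⟩ ≤ E_{s∼μ}[⟨r(f,s), w⟩] + ε·Δ·‖w‖₁. -/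

import Mathlib

open scoped BigOperators
open MeasureTheory ProbabilityTheory

/-- Dot product on `ℝ^d`. -/
def dot {d : ℕ} (x w : Fin d → ℝ) : ℝ := ∑ k, x k * w k


open Real in

lemma hoeffding_scalar {p : ℝ} (h0 : 0 ≤ p) (h1 : p ≤ 1) (h : ℝ) :
    Real.log (1 - p + p * Real.exp h) ≤ p * h + h ^ 2 / 8 := by
  have hgpos : ∀ x : ℝ, 0 < 1 - p + p * Real.exp x := by
    intro x
    rcases eq_or_lt_of_le h0 with hp | hp
    · simp [← hp]
    · nlinarith [exp_pos x, mul_pos hp (exp_pos x)]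
  set F : ℝ → ℝ := fun x => Real.log (1 - p + p * Real.exp x) - p * x - x ^ 2 / 8 with hF
  set F' : ℝ → ℝ := fun x => p * Real.exp x / (1 - p + p * Real.exp x) - p - x / 4 with hF'
  have hg : ∀ x : ℝ, HasDerivAt (fun y => 1 - p + p * Real.exp y) (p * Real.exp x) x := by
    intro x
    simpa using ((Real.hasDerivAt_exp x).const_mul p).const_add (1 - p)
  have hDF : ∀ x : ℝ, HasDerivAt F (F' x) x := by
    intro x
    have h1' : HasDerivAt (fun y => Real.log (1 - p + p * Real.exp y))
        (p * Real.exp x / (1 - p + p * Real.exp x)) x := (hg x).log (hgpos x).ne'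
    have h2 : HasDerivAt (fun y : ℝ => p * y) p x := by
      simpa using (hasDerivAt_id x).const_mul p
    have h3 : HasDerivAt (fun y : ℝ => y ^ 2 / 8) (x / 4) x := by
      have := (hasDerivAt_pow 2 x).div_const 8
      refine this.congr_deriv ?_
      ring
    exact (h1'.sub h2).sub h3
  have hDF' : ∀ x : ℝ, HasDerivAt F'
      ((p * Real.exp x * (1 - p + p * Real.exp x) - p * Real.exp x * (p * Real.exp x)) /
        (1 - p + p * Real.exp x) ^ 2 - 1 / 4) x := by
    intro x
    have hq : HasDerivAt (fun y => p * Real.exp y / (1 - p + p * Real.exp y))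
        ((p * Real.exp x * (1 - p + p * Real.exp x) - p * Real.exp x * (p * Real.exp x)) /
          (1 - p + p * Real.exp x) ^ 2) x :=
      ((Real.hasDerivAt_exp x).const_mul p).div (hg x) (hgpos x).ne'
    have h4 : HasDerivAt (fun y : ℝ => p + y / 4) (1 / 4) x := by
      simpa using ((hasDerivAt_id x).div_const 4).const_add p
    have := hq.sub h4
    rw [show F' = ((fun y => p * Real.exp y / (1 - p + p * Real.exp y)) - fun y => p + y / 4) by
      funext y; simp only [hF', Pi.sub_apply]; ring]
    exact this
  have hF'anti : Antitone F' := by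
    apply antitone_of_deriv_nonpos (fun x => (hDF' x).differentiableAt)
    intro x
    rw [(hDF' x).deriv]
    have hgx := hgpos x
    have hpe : 0 ≤ p * Real.exp x := mul_nonneg h0 (exp_pos x).le
    rw [sub_nonpos, div_le_iff₀ (by positivity)]
    nlinarith [sq_nonneg ((1 - p) - p * Real.exp x)]
  have hF'0 : F' 0 = 0 := by simp [hF']
  have hcont : Continuous F := by
    have : Differentiable ℝ F := fun x => (hDF x).differentiableAt
    exact this.continuous
  have key : F h ≤ F 0 := by
    rcases le_total h 0 with hh | hh
    · have hmono : MonotoneOn F (Set.Iic 0) := by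
        apply monotoneOn_of_deriv_nonneg (convex_Iic 0) hcont.continuousOn
          (fun x _ => (hDF x).differentiableAt.differentiableWithinAt)
        intro x hx
        rw [(hDF x).deriv]
        rw [interior_Iic] at hx
        have := hF'anti (le_of_lt hx)
        rw [hF'0] at this
        exact this
      exact hmono hh Set.self_mem_Iic hh
    · have hanti : AntitoneOn F (Set.Ici 0) := by
        apply antitoneOn_of_deriv_nonpos (convex_Ici 0) hcont.continuousOn
          (fun x _ => (hDF x).differentiableAt.differentiableWithinAt)
        intro x hx
        rw [(hDF x).deriv]
        rw [interior_Ici] at hx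
        have := hF'anti (le_of_lt hx)
        rw [hF'0] at this
        exact this
      exact hanti Set.self_mem_Ici hh hh
  have hF0 : F 0 = 0 := by simp [hF]
  rw [hF0] at key
  simp only [hF] at key
  linarith


lemma mgf_bound_finite {S : Type} [Fintype S] [MeasurableSpace S]
    [MeasurableSingletonClass S]
    (μ : Measure S) [IsProbabilityMeasure μ] (g : S → ℝ) (c Δ : ℝ) (hΔ : 0 < Δ)
    (hg : ∀ s, c ≤ g s ∧ g s ≤ c + Δ) (lam : ℝ) :
    ∫ s, Real.exp (lam * (g s - ∫ s', g s' ∂μ)) ∂μ ≤ Real.exp (lam ^ 2 * Δ ^ 2 / 8) := by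
  set m : ℝ := ∫ s', g s' ∂μ with hm
  have hint : ∀ f : S → ℝ, Integrable f μ := fun f => Integrable.of_finite
  have hcm : c ≤ m ∧ m ≤ c + Δ := by
    constructor
    · calc c = ∫ _, c ∂μ := by simp
        _ ≤ m := integral_mono (hint _) (hint _) (fun s => (hg s).1)
    · calc m ≤ ∫ _, c + Δ ∂μ := integral_mono (hint _) (hint _) (fun s => (hg s).2)
        _ = c + Δ := by simp
  set p : ℝ := (m - c) / Δ with hp
  have hp0 : 0 ≤ p := div_nonneg (by linarith [hcm.1]) hΔ.le
  have hp1 : p ≤ 1 := (div_le_one hΔ).2 (by linarith [hcm.2])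
  set h : ℝ := lam * Δ with hh
  set u : S → ℝ := fun s => (g s - c) / Δ with hu
  have hu01 : ∀ s, 0 ≤ u s ∧ u s ≤ 1 := fun s =>
    ⟨div_nonneg (by linarith [(hg s).1]) hΔ.le, (div_le_one hΔ).2 (by linarith [(hg s).2])⟩
  have hintu : ∫ s, u s ∂μ = p := by
    simp only [hu, hp, div_eq_mul_inv]
    rw [integral_mul_const, integral_sub (hint _) (hint _)]
    simp [hm]
  -- pointwise bound
  have hpt : ∀ s, Real.exp (lam * (g s - m)) ≤
      Real.exp (-(h * p)) * (1 - u s + u s * Real.exp h) := by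
    intro s
    have hconv := convexOn_exp.2 (Set.mem_univ (0 : ℝ)) (Set.mem_univ h)
      (by linarith [(hu01 s).2] : (0:ℝ) ≤ 1 - u s) (hu01 s).1 (by ring)
    simp only [smul_eq_mul, mul_zero, zero_add, Real.exp_zero, mul_one] at hconv
    have hgs : lam * (g s - m) = -(h * p) + h * u s := by
      simp only [hh, hp, hu]
      field_simp
      ring
    rw [hgs, Real.exp_add]
    have : Real.exp (u s * h) ≤ 1 - u s + u s * Real.exp h := by
      convert hconv using 2 <;> ring_nf
    calc Real.exp (-(h*p)) * Real.exp (h * u s)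
        ≤ Real.exp (-(h*p)) * (1 - u s + u s * Real.exp h) := by
          apply mul_le_mul_of_nonneg_left _ (Real.exp_pos _).le
          rw [mul_comm h (u s)]; exact this
      _ = _ := rfl
  have hstep : ∫ s, Real.exp (lam * (g s - m)) ∂μ ≤
      Real.exp (-(h * p)) * (1 - p + p * Real.exp h) := by
    calc ∫ s, Real.exp (lam * (g s - m)) ∂μ
        ≤ ∫ s, Real.exp (-(h * p)) * (1 - u s + u s * Real.exp h) ∂μ :=
          integral_mono (hint _) (hint _) hpt
      _ = Real.exp (-(h * p)) * (1 - p + p * Real.exp h) := by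
          rw [integral_const_mul]
          congr 1
          rw [show (fun s => 1 - u s + u s * Real.exp h) =
            (fun s => 1 + u s * (Real.exp h - 1)) by funext s; ring]
          rw [integral_add (hint _) (hint _), integral_mul_const, hintu]
          simp; ring
  refine hstep.trans ?_
  have hpos : 0 < 1 - p + p * Real.exp h := by
    rcases eq_or_lt_of_le hp0 with hq | hq
    · simp [← hq]
    · nlinarith [Real.exp_pos h, mul_pos hq (Real.exp_pos h)]
  have hlog := hoeffding_scalar hp0 hp1 h
  have : 1 - p + p * Real.exp h ≤ Real.exp (p * h + h ^ 2 / 8) := by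
    rw [← Real.exp_log hpos]
    exact Real.exp_le_exp.2 hlog
  calc Real.exp (-(h * p)) * (1 - p + p * Real.exp h)
      ≤ Real.exp (-(h * p)) * Real.exp (p * h + h ^ 2 / 8) := by
        exact mul_le_mul_of_nonneg_left this (Real.exp_pos _).le
    _ = Real.exp (h ^ 2 / 8) := by rw [← Real.exp_add]; ring_nf
    _ = Real.exp (lam ^ 2 * Δ ^ 2 / 8) := by rw [hh]; ring_nf

lemma tail_bound {S : Type} [Fintype S] [MeasurableSpace S] [MeasurableSingletonClass S]
    {Ω : Type} [MeasurableSpace Ω] (P : Measure Ω) [IsProbabilityMeasure P]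
    (T : ℕ) (X : Fin T → Ω → S)
    (hmeas : ∀ t, Measurable (X t))
    (hindep : iIndepFun X P)
    (μ : Measure S) [IsProbabilityMeasure μ]
    (hident : ∀ t, Measure.map (X t) P = μ)
    (Δ : ℝ) (hΔ : 0 < Δ) (g : S → ℝ) (c : ℝ)
    (hg : ∀ s, c ≤ g s ∧ g s ≤ c + Δ)
    (ε : ℝ) (hε : 0 < ε) :
    P {ω | (T : ℝ) * (ε * Δ) ≤ ∑ t : Fin T, (g (X t ω) - ∫ s, g s ∂μ)} ≤
      ENNReal.ofReal (Real.exp (-(2 * (T : ℝ) * ε ^ 2))) := by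
  set m : ℝ := ∫ s, g s ∂μ with hm
  set Y : Fin T → Ω → ℝ := fun t ω => g (X t ω) - m with hY
  set t0 : ℝ := 4 * ε / Δ with ht0
  have ht0pos : 0 < t0 := by positivity
  have hmeasg : Measurable g := measurable_of_countable g
  have hYmeas : ∀ t, Measurable (Y t) := fun t => (hmeasg.comp (hmeas t)).sub measurable_const
  have hYindep : iIndepFun Y P := by
    exact hindep.comp (fun _ s => g s - m) (fun _ => hmeasg.sub measurable_const)
  -- integrability of exp (t0 * Y t)
  have hYbdd : ∀ t ω, |Y t ω| ≤ |c - m| + Δ := by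
    intro t ω
    have h1 := (hg (X t ω)).1
    have h2 := (hg (X t ω)).2
    rw [abs_le]
    constructor <;> cases' abs_cases (c - m) with h h <;> simp only [hY] <;> linarith [h.1]
  have hint : ∀ t : Fin T, Integrable (fun ω => Real.exp (t0 * Y t ω)) P := by
    intro t
    refine Integrable.mono' (integrable_const (Real.exp (t0 * (|c - m| + Δ)))) ?_ ?_
    · exact (((hYmeas t).const_mul t0).exp).aestronglyMeasurable
    · filter_upwards with ω
      rw [Real.norm_eq_abs, abs_of_pos (Real.exp_pos _)]
      apply Real.exp_le_exp.2
      have := hYbdd t ω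
      have := (abs_le.1 this).2
      nlinarith
  have hintsum : Integrable (fun ω => Real.exp (t0 * (∑ t, Y t) ω)) P :=
    hYindep.integrable_exp_mul_sum hYmeas (fun t _ => hint t)
  -- mgf of each Y t
  have hmgf : ∀ t : Fin T, mgf (Y t) P t0 ≤ Real.exp (t0 ^ 2 * Δ ^ 2 / 8) := by
    intro t
    have : mgf (Y t) P t0 = ∫ s, Real.exp (t0 * (g s - m)) ∂μ := by
      rw [mgf, ← hident t, integral_map (hmeas t).aemeasurable]
      exact ((hmeasg.sub measurable_const).const_mul t0).exp.aestronglyMeasurable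
    rw [this, hm]
    exact mgf_bound_finite μ g c Δ hΔ hg t0
  -- Chernoff
  have hcher := measure_ge_le_exp_mul_mgf (μ := P) (X := ∑ t, Y t)
    ((T : ℝ) * (ε * Δ)) ht0pos.le hintsum
  have hprod : mgf (∑ t, Y t) P t0 ≤ Real.exp ((T : ℝ) * (t0 ^ 2 * Δ ^ 2 / 8)) := by
    rw [hYindep.mgf_sum hYmeas]
    calc ∏ t : Fin T, mgf (Y t) P t0 ≤ ∏ _t : Fin T, Real.exp (t0 ^ 2 * Δ ^ 2 / 8) :=
          Finset.prod_le_prod (fun t _ => mgf_nonneg) (fun t _ => hmgf t)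
      _ = Real.exp ((T : ℝ) * (t0 ^ 2 * Δ ^ 2 / 8)) := by
          rw [Finset.prod_const, ← Real.exp_nat_mul]
          simp
  have hsetEq : {ω | (T : ℝ) * (ε * Δ) ≤ ∑ t : Fin T, (g (X t ω) - m)} =
      {ω | (T : ℝ) * (ε * Δ) ≤ (∑ t, Y t) ω} := by
    ext ω; simp [hY]
  rw [hsetEq]
  rw [ENNReal.le_ofReal_iff_toReal_le (measure_ne_top _ _) (Real.exp_pos _).le]
  refine hcher.trans ?_
  calc Real.exp (-t0 * ((T:ℝ) * (ε * Δ))) * mgf (∑ t, Y t) P t0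
      ≤ Real.exp (-t0 * ((T:ℝ) * (ε * Δ))) * Real.exp ((T : ℝ) * (t0 ^ 2 * Δ ^ 2 / 8)) :=
        mul_le_mul_of_nonneg_left hprod (Real.exp_pos _).le
    _ = Real.exp (-(2 * (T : ℝ) * ε ^ 2)) := by
        rw [← Real.exp_add]
        congr 1
        rw [ht0]
        field_simp
        ring

/-- Sample complexity, dimension-dependent version: with
`T ≥ (1/(2ε²)) log(2|Φ|d/δ)` i.i.d. observations, with probability at least
`1 - δ`, simultaneously for all deviations `f ∈ Φ` and all `w ∈ ℝ^d` the
empirical regret exceeds the expected regret by at most `ε·Δ·‖w‖₁`. -/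
theorem sample_complexity_dimension_dependent
    {d : ℕ} {S : Type} [Fintype S] [Nonempty S] [MeasurableSpace S]
    [MeasurableSingletonClass S]
    {Φ : Type} [Fintype Φ] [Nonempty Φ]
    (r : Φ → S → Fin d → ℝ)
    {Ω : Type} [MeasurableSpace Ω] (P : Measure Ω) [IsProbabilityMeasure P]
    (T : ℕ) (X : Fin T → Ω → S)
    (hmeas : ∀ t, Measurable (X t))
    (hindep : iIndepFun X P)
    (μ : Measure S) [IsProbabilityMeasure μ]
    (hident : ∀ t, Measure.map (X t) P = μ)
    (Δ : ℝ) (hΔ : 0 < Δ)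
    (hrange : ∀ (f : Φ) (k : Fin d), ∃ c : ℝ, ∀ s : S,
      c ≤ r f s k ∧ r f s k ≤ c + Δ)
    (ε : ℝ) (hε : 0 < ε) (δ : ℝ) (hδ0 : 0 < δ) (hδ1 : δ < 1)
    (hT : (1 / (2 * ε ^ 2)) *
      Real.log (2 * (Fintype.card Φ : ℝ) * (d : ℝ) / δ) ≤ (T : ℝ)) :
    ENNReal.ofReal (1 - δ) ≤
      P {ω | ∀ (f : Φ) (w : Fin d → ℝ),
        (1 / (T : ℝ)) * ∑ t : Fin T, dot (r f (X t ω)) w ≤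
          (∫ s, dot (r f s) w ∂μ) + ε * Δ * (∑ k, |w k|)} := by
  classical
  have hof1 : ENNReal.ofReal (1 - δ) ≤ 1 := by
    rw [← ENNReal.ofReal_one]
    exact ENNReal.ofReal_le_ofReal (by linarith)
  rcases Nat.eq_zero_or_pos d with hd0 | hdpos
  · subst hd0
    have : {ω | ∀ (f : Φ) (w : Fin 0 → ℝ),
        (1 / (T : ℝ)) * ∑ t : Fin T, dot (r f (X t ω)) w ≤
          (∫ s, dot (r f s) w ∂μ) + ε * Δ * (∑ k, |w k|)} = Set.univ := by
      ext ω
      simp [dot]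
    rw [this, measure_univ]
    exact hof1
  -- main case
  set N : ℕ := Fintype.card Φ with hN
  have hNpos : 0 < N := Fintype.card_pos
  have hNd1 : (2 : ℝ) ≤ 2 * (N : ℝ) * (d : ℝ) := by
    have h1 : (1 : ℝ) ≤ (N : ℝ) := by exact_mod_cast hNpos
    have h2 : (1 : ℝ) ≤ (d : ℝ) := by exact_mod_cast hdpos
    nlinarith
  have hratio : (1 : ℝ) < 2 * (N : ℝ) * (d : ℝ) / δ := by
    rw [lt_div_iff₀ hδ0]
    nlinarith
  have hlogpos : 0 < Real.log (2 * (N : ℝ) * (d : ℝ) / δ) := Real.log_pos hratio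
  have hTpos : (0 : ℝ) < (T : ℝ) := by
    have h2e : (0 : ℝ) < 1 / (2 * ε ^ 2) := by positivity
    calc (0 : ℝ) < (1 / (2 * ε ^ 2)) * Real.log (2 * (N : ℝ) * (d : ℝ) / δ) := by positivity
      _ ≤ (T : ℝ) := hT
  have hexp : Real.exp (-(2 * (T : ℝ) * ε ^ 2)) ≤ δ / (2 * (N : ℝ) * (d : ℝ)) := by
    have hlogT : Real.log (2 * (N : ℝ) * (d : ℝ) / δ) ≤ 2 * ε ^ 2 * (T : ℝ) := by
      have h2e : (0 : ℝ) < 2 * ε ^ 2 := by positivity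
      have h3 := mul_le_mul_of_nonneg_left hT h2e.le
      have h4 : 2 * ε ^ 2 * (1 / (2 * ε ^ 2) * Real.log (2 * (N : ℝ) * (d : ℝ) / δ)) =
          Real.log (2 * (N : ℝ) * (d : ℝ) / δ) := by field_simp
      linarith
    have hpos : (0 : ℝ) < δ / (2 * (N : ℝ) * (d : ℝ)) := by positivity
    rw [← Real.exp_log hpos]
    apply Real.exp_le_exp.2
    rw [Real.log_div (by positivity) hδ0.ne'] at hlogT
    rw [Real.log_div hδ0.ne' (by positivity)]
    linarith
  -- bad events
  set m : Φ → Fin d → ℝ := fun f k => ∫ s, r f s k ∂μ with hm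
  set g : Φ × Fin d × Bool → S → ℝ :=
    fun q s => if q.2.2 then r q.1 s q.2.1 else -(r q.1 s q.2.1) with hg
  set B : Φ × Fin d × Bool → Set Ω :=
    fun q => {ω | (T : ℝ) * (ε * Δ) ≤ ∑ t : Fin T, (g q (X t ω) - ∫ s, g q s ∂μ)} with hB
  have hBbound : ∀ q, P (B q) ≤ ENNReal.ofReal (Real.exp (-(2 * (T : ℝ) * ε ^ 2))) := by
    rintro ⟨f, k, b⟩
    obtain ⟨c, hc⟩ := hrange f k
    cases b
    · exact tail_bound P T X hmeas hindep μ hident Δ hΔ _ (-(c + Δ))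
        (fun s => by simp only [hg]; constructor <;> simp <;> linarith [(hc s).1, (hc s).2]) ε hε
    · exact tail_bound P T X hmeas hindep μ hident Δ hΔ _ c
        (fun s => by simp only [hg]; constructor <;> simp [(hc s).1, (hc s).2]) ε hε
  have hBmeas : ∀ q, MeasurableSet (B q) := by
    intro q
    apply measurableSet_le measurable_const
    apply Finset.measurable_sum
    intro t _
    exact ((measurable_of_countable (g q)).comp (hmeas t)).sub measurable_const
  have hUnion : P (⋃ q, B q) ≤ ENNReal.ofReal δ := by
    calc P (⋃ q, B q) ≤ ∑' q, P (B q) := measure_iUnion_le _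
      _ = ∑ q, P (B q) := tsum_fintype _
      _ ≤ ∑ _q : Φ × Fin d × Bool, ENNReal.ofReal (Real.exp (-(2 * (T : ℝ) * ε ^ 2))) :=
          Finset.sum_le_sum (fun q _ => hBbound q)
      _ = (Fintype.card (Φ × Fin d × Bool)) •
            ENNReal.ofReal (Real.exp (-(2 * (T : ℝ) * ε ^ 2))) := by
          rw [Finset.sum_const, Finset.card_univ]
      _ ≤ ENNReal.ofReal δ := by
          rw [nsmul_eq_mul, ← ENNReal.ofReal_natCast, ← ENNReal.ofReal_mul (by positivity)]
          apply ENNReal.ofReal_le_ofReal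
          have hcard : (Fintype.card (Φ × Fin d × Bool) : ℝ) = 2 * (N : ℝ) * (d : ℝ) := by
            simp [Fintype.card_prod, hN]
            ring
          rw [hcard]
          have h2nd : (0 : ℝ) < 2 * (N : ℝ) * (d : ℝ) := by positivity
          calc 2 * (N : ℝ) * (d : ℝ) * Real.exp (-(2 * (T : ℝ) * ε ^ 2))
              ≤ 2 * (N : ℝ) * (d : ℝ) * (δ / (2 * (N : ℝ) * (d : ℝ))) :=
                mul_le_mul_of_nonneg_left hexp h2nd.le
            _ = δ := by field_simp
  have hsub : (⋃ q, B q)ᶜ ⊆ {ω | ∀ (f : Φ) (w : Fin d → ℝ),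
        (1 / (T : ℝ)) * ∑ t : Fin T, dot (r f (X t ω)) w ≤
          (∫ s, dot (r f s) w ∂μ) + ε * Δ * (∑ k, |w k|)} := by
    intro ω hω f w
    simp only [Set.mem_compl_iff, Set.mem_iUnion, not_exists] at hω
    have hint : ∀ f : S → ℝ, Integrable f μ := fun f => Integrable.of_finite
    -- coordinate-wise deviation bound
    have hdev : ∀ k : Fin d, |(∑ t : Fin T, r f (X t ω) k) - (T : ℝ) * m f k| ≤
        (T : ℝ) * (ε * Δ) := by
      intro k
      have htrue := hω (f, k, true)
      have hfalse := hω (f, k, false)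
      simp only [hB, Set.mem_setOf_eq, not_le, hg, if_true, Bool.false_eq_true, if_false] at htrue hfalse
      rw [Finset.sum_sub_distrib, Finset.sum_const, Finset.card_univ, Fintype.card_fin,
        nsmul_eq_mul] at htrue hfalse
      have hintneg : ∫ s, -(r f s k) ∂μ = -(m f k) := by
        rw [integral_neg]
      rw [hintneg] at hfalse
      rw [abs_le]
      constructor
      · have : ∑ t : Fin T, -(r f (X t ω) k) = -∑ t : Fin T, r f (X t ω) k := by
          rw [Finset.sum_neg_distrib]
        rw [this] at hfalse
        linarith
      · linarith
    -- integral of dot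
    have hintdot : ∫ s, dot (r f s) w ∂μ = ∑ k, m f k * w k := by
      simp only [dot]
      rw [integral_finset_sum _ (fun k _ => hint _)]
      congr 1
      funext k
      rw [integral_mul_const]
    rw [hintdot]
    have hswap : (1 / (T : ℝ)) * ∑ t : Fin T, dot (r f (X t ω)) w =
        ∑ k, ((1 / (T : ℝ)) * ∑ t : Fin T, r f (X t ω) k) * w k := by
      simp only [dot]
      rw [Finset.sum_comm, Finset.mul_sum]
      refine Finset.sum_congr rfl fun k _ => ?_
      rw [← Finset.sum_mul]
      ring
    rw [hswap, Finset.mul_sum, ← Finset.sum_add_distrib]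
    apply Finset.sum_le_sum
    intro k _
    have habs : |(1 / (T : ℝ)) * (∑ t : Fin T, r f (X t ω) k) - m f k| ≤ ε * Δ := by
      have : (1 / (T : ℝ)) * (∑ t : Fin T, r f (X t ω) k) - m f k =
          (1 / (T : ℝ)) * ((∑ t : Fin T, r f (X t ω) k) - (T : ℝ) * m f k) := by
        field_simp
      rw [this, abs_mul, abs_of_pos (by positivity : (0:ℝ) < 1 / (T:ℝ))]
      calc (1 / (T : ℝ)) * |(∑ t : Fin T, r f (X t ω) k) - (T : ℝ) * m f k|
          ≤ (1 / (T : ℝ)) * ((T : ℝ) * (ε * Δ)) :=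
            mul_le_mul_of_nonneg_left (hdev k) (by positivity)
        _ = ε * Δ := by field_simp
    have hkey : ((1 / (T : ℝ)) * (∑ t : Fin T, r f (X t ω) k) - m f k) * w k ≤
        ε * Δ * |w k| := by
      calc ((1 / (T : ℝ)) * (∑ t : Fin T, r f (X t ω) k) - m f k) * w k
          ≤ |((1 / (T : ℝ)) * (∑ t : Fin T, r f (X t ω) k) - m f k) * w k| := le_abs_self _
        _ = |(1 / (T : ℝ)) * (∑ t : Fin T, r f (X t ω) k) - m f k| * |w k| := abs_mul _ _
        _ ≤ ε * Δ * |w k| := mul_le_mul_of_nonneg_right habs (abs_nonneg _)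
    nlinarith [hkey]
  -- conclude
  have hmeasU : MeasurableSet (⋃ q, B q) := MeasurableSet.iUnion hBmeas
  have hcompl : P ((⋃ q, B q)ᶜ) = 1 - P (⋃ q, B q) := by
    rw [measure_compl hmeasU (measure_ne_top _ _), measure_univ]
  calc ENNReal.ofReal (1 - δ) = 1 - ENNReal.ofReal δ := by
        rw [ENNReal.ofReal_sub 1 hδ0.le, ENNReal.ofReal_one]
    _ ≤ 1 - P (⋃ q, B q) := tsub_le_tsub_left hUnion 1
    _ = P ((⋃ q, B q)ᶜ) := hcompl.symm
    _ ≤ _ := measure_mono hsub
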